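/- For every integer n ≥ 1 and real ρ > 0, (1/(n−1)!) ∫₀^∞ ln(1 + x/ρ) x^{n−1} e^{−x} dx = e^{ρ} ∑_{k=0}^{n−1} E_{k+1}(ρ), where E_τ(ρ) = ∫₁^∞ e^{−ρt} t^{−τ} dt is the exponential integral of order τ. (Closed form of the ergodic MRC capacity, used as Eqn. (47) in the proof of Proposition 1 and for Φ in Propositions 1 and 2) -/

import Mathlib

open Real Set MeasureTheory Filter Nat intervalIntegral
open scoped Topology

lemma gamma_int (k : ℕ) : IntegrableOn (fun x : ℝ => exp (-x) * x ^ k) (Ioi 0) := by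
  have h := Real.GammaIntegral_convergent (s := (k : ℝ) + 1) (by positivity)
  refine h.congr_fun (fun x hx => ?_) measurableSet_Ioi
  simp only [add_sub_cancel_right, Real.rpow_natCast]

lemma gamma_val (k : ℕ) : ∫ x in Ioi (0:ℝ), exp (-x) * x ^ k = (k ! : ℝ) := by
  have h := Real.Gamma_eq_integral (s := (k : ℝ) + 1) (by positivity)
  rw [show ((k:ℝ)+1) = ((k:ℕ):ℝ) + 1 by norm_num, Real.Gamma_nat_eq_factorial] at h
  rw [h]
  refine setIntegral_congr_fun measurableSet_Ioi (fun x hx => ?_)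
  simp only [add_sub_cancel_right, Real.rpow_natCast]

lemma intA {ρ : ℝ} (hρ : 0 < ρ) (k : ℕ) :
    IntegrableOn (fun x : ℝ => exp (-x) * x ^ k / (ρ + x)) (Ioi 0) := by
  refine Integrable.mono' ((gamma_int k).const_mul ρ⁻¹) ?_ ?_
  · refine (ContinuousOn.aestronglyMeasurable ?_ measurableSet_Ioi)
    refine ContinuousOn.div (by fun_prop) (by fun_prop) (fun x hx => ?_)
    have : (0:ℝ) < x := hx
    positivity
  · refine (ae_restrict_iff' measurableSet_Ioi).2 (ae_of_all _ (fun x hx => ?_))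
    have hx0 : (0:ℝ) < x := hx
    have h1 : (0:ℝ) < ρ + x := by linarith
    rw [Real.norm_eq_abs, abs_of_nonneg (by positivity)]
    rw [div_le_iff₀ h1]
    calc exp (-x) * x ^ k = ρ⁻¹ * (exp (-x) * x ^ k) * ρ := by field_simp
      _ ≤ ρ⁻¹ * (exp (-x) * x ^ k) * (ρ + x) := by
          refine mul_le_mul_of_nonneg_left (by linarith) (by positivity)

lemma A_succ {ρ : ℝ} (hρ : 0 < ρ) (k : ℕ) :
    ∫ x in Ioi (0:ℝ), exp (-x) * x ^ (k+1) / (ρ + x)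
      = (k ! : ℝ) - ρ * ∫ x in Ioi (0:ℝ), exp (-x) * x ^ k / (ρ + x) := by
  have heq : ∀ x ∈ Ioi (0:ℝ), exp (-x) * x ^ (k+1) / (ρ + x)
      = exp (-x) * x ^ k - ρ * (exp (-x) * x ^ k / (ρ + x)) := by
    intro x hx
    have hx0 : (0:ℝ) < x := hx
    have h1 : (0:ℝ) < ρ + x := by linarith
    field_simp
    ring
  rw [setIntegral_congr_fun measurableSet_Ioi heq,
    integral_sub (gamma_int k) ((intA hρ k).const_mul ρ), gamma_val,
    MeasureTheory.integral_const_mul]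

lemma intE {ρ : ℝ} (hρ : 0 < ρ) (k : ℕ) :
    IntegrableOn (fun t : ℝ => exp (-ρ * t) / t ^ k) (Ioi 1) := by
  refine Integrable.mono' (exp_neg_integrableOn_Ioi 1 hρ) ?_ ?_
  · refine (ContinuousOn.aestronglyMeasurable ?_ measurableSet_Ioi)
    refine ContinuousOn.div (by fun_prop) (by fun_prop) (fun t ht => ?_)
    have : (1:ℝ) < t := ht
    positivity
  · refine (ae_restrict_iff' measurableSet_Ioi).2 (ae_of_all _ (fun t ht => ?_))
    have ht1 : (1:ℝ) < t := ht
    have htk : (1:ℝ) ≤ t ^ k := one_le_pow₀ ht1.le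
    rw [Real.norm_eq_abs, abs_of_nonneg (by positivity)]
    rw [div_le_iff₀ (by positivity)]
    nlinarith [exp_pos (-ρ * t)]

lemma E_sub {ρ : ℝ} (hρ : 0 < ρ) (k : ℕ) :
    ∫ t in Ioi (1:ℝ), exp (-ρ * t) / t ^ (k+1)
      = exp (-ρ) * ρ ^ k * ∫ x in Ioi (0:ℝ), exp (-x) / (ρ + x) ^ (k+1) := by
  have himg : (fun x : ℝ => 1 + x / ρ) '' (Ioi 0) = Ioi 1 := by
    ext t
    simp only [mem_image, mem_Ioi]
    constructor
    · rintro ⟨x, hx, rfl⟩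
      have : 0 < x / ρ := by positivity
      linarith
    · intro ht
      exact ⟨ρ * (t - 1), by nlinarith, by field_simp; ring⟩
  have hderiv : ∀ x ∈ Ioi (0:ℝ), HasDerivWithinAt (fun x : ℝ => 1 + x / ρ) ρ⁻¹ (Ioi 0) x := by
    intro x hx
    simpa using (((hasDerivAt_id x).div_const ρ).const_add 1).hasDerivWithinAt
  have hinj : InjOn (fun x : ℝ => 1 + x / ρ) (Ioi 0) := by
    intro a _ b _ h
    field_simp at h
    linarith
  rw [← himg, integral_image_eq_integral_abs_deriv_smul measurableSet_Ioi hderiv hinj]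
  rw [← MeasureTheory.integral_const_mul]
  refine setIntegral_congr_fun measurableSet_Ioi (fun x hx => ?_)
  have hx0 : (0:ℝ) < x := hx
  have h1 : (0:ℝ) < ρ + x := by linarith
  rw [abs_of_nonneg (by positivity), smul_eq_mul]
  rw [show -ρ * (1 + x / ρ) = -ρ + -x by field_simp; ring, Real.exp_add]
  rw [show (1 + x / ρ) = (ρ + x) / ρ by field_simp, div_pow]
  field_simp
  ring

lemma E_rec {ρ : ℝ} (hρ : 0 < ρ) (k : ℕ) (hk : 1 ≤ k) :
    ρ * (∫ t in Ioi (1:ℝ), exp (-ρ * t) / t ^ k)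
      + k * ∫ t in Ioi (1:ℝ), exp (-ρ * t) / t ^ (k+1) = exp (-ρ) := by
  obtain ⟨j, rfl⟩ : ∃ j, k = j + 1 := ⟨k - 1, by omega⟩
  have hH : ∀ t ∈ Ici (1:ℝ), HasDerivAt (fun t : ℝ => exp (-ρ * t) / t ^ (j+1))
      (-(ρ * (exp (-ρ * t) / t ^ (j+1)) + (j+1) * (exp (-ρ * t) / t ^ (j+1+1)))) t := by
    intro t ht
    have ht0 : (0:ℝ) < t := lt_of_lt_of_le one_pos ht
    have h1 : HasDerivAt (fun t : ℝ => exp (-ρ * t)) (exp (-ρ * t) * -ρ) t := by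
      simpa using ((hasDerivAt_id t).const_mul (-ρ)).exp
    have h2 : HasDerivAt (fun t : ℝ => t ^ (j+1)) ((j+1) * t ^ j) t := by
      simpa using hasDerivAt_pow (j+1) t
    have := h1.div h2 (by positivity)
    refine this.congr_deriv ?_
    field_simp
    ring
  have hint : IntegrableOn (fun t : ℝ =>
      -(ρ * (exp (-ρ * t) / t ^ (j+1)) + (j+1) * (exp (-ρ * t) / t ^ (j+1+1)))) (Ioi 1) :=
    (((intE hρ (j+1)).const_mul ρ).add ((intE hρ (j+1+1)).const_mul (j+1))).neg
  have htend : Tendsto (fun t : ℝ => exp (-ρ * t) / t ^ (j+1)) atTop (𝓝 0) := by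
    have hb : Tendsto (fun t : ℝ => -ρ * t) atTop atBot :=
      Tendsto.const_mul_atTop_of_neg (neg_neg_iff_pos.mpr hρ) tendsto_id
    have h0 : Tendsto (fun t : ℝ => exp (-ρ * t)) atTop (𝓝 0) :=
      Real.tendsto_exp_atBot.comp hb
    refine squeeze_zero' ?_ ?_ h0
    · filter_upwards [eventually_ge_atTop (1:ℝ)] with t ht
      positivity
    · filter_upwards [eventually_ge_atTop (1:ℝ)] with t ht
      rw [div_le_iff₀ (by positivity)]
      nlinarith [exp_pos (-ρ * t), one_le_pow₀ ht (n := j+1)]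
  have := integral_Ioi_of_hasDerivAt_of_tendsto' hH hint htend
  rw [MeasureTheory.integral_neg, integral_add ((intE hρ (j+1)).const_mul ρ) ((intE hρ (j+1+1)).const_mul (j+1)),
    MeasureTheory.integral_const_mul, MeasureTheory.integral_const_mul] at this
  simp only [one_pow, mul_one] at this
  push_cast
  push_cast at this
  linarith [this]

lemma key {ρ : ℝ} (hρ : 0 < ρ) (k : ℕ) :
    ∫ x in Ioi (0:ℝ), exp (-x) * x ^ k / (ρ + x)
      = (k ! : ℝ) * exp ρ * ∫ t in Ioi (1:ℝ), exp (-ρ * t) / t ^ (k+1) := by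
  have he : exp ρ * exp (-ρ) = 1 := by rw [← Real.exp_add]; simp
  induction k with
  | zero =>
    have h0 := E_sub hρ 0
    simp only [zero_add, pow_zero, pow_one, one_mul, mul_one, factorial_zero,
      Nat.cast_one] at h0 ⊢
    rw [h0, ← mul_assoc, he, one_mul]
  | succ k ih =>
    have h := E_rec hρ (k+1) (by omega)
    rw [A_succ hρ k, ih]
    push_cast [Nat.factorial_succ]
    push_cast at h
    linear_combination (-(k ! : ℝ) * exp ρ) * h - (k ! : ℝ) * he

lemma telescope (m : ℕ) (x : ℝ) :
    ∑ k ∈ Finset.range (m+1),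
      ((m ! / k ! : ℝ) * ((k * x^(k-1)) * exp (-x) + x^k * -exp (-x)))
      = -(x ^ m * exp (-x)) := by
  have h : ∀ k : ℕ, ((m ! / k ! : ℝ) * ((k * x^(k-1)) * exp (-x) + x^k * -exp (-x)))
      = ((m ! / k ! : ℝ) * (k * x^(k-1)) - (m ! / k ! : ℝ) * x^k) * exp (-x) := by
    intro k; ring
  simp only [h, ← Finset.sum_mul]
  have : ∑ k ∈ Finset.range (m+1),
      ((m ! / k ! : ℝ) * (k * x^(k-1)) - (m ! / k ! : ℝ) * x^k) = -x ^ m := by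
    rw [Finset.sum_range_succ']
    have hc : ∀ i : ℕ, (m ! / (i+1)! : ℝ) * ((i+1) * x ^ i) = (m ! / i ! : ℝ) * x ^ i := by
      intro i
      rw [factorial_succ]
      have h1 : ((i ! : ℝ)) ≠ 0 := Nat.cast_ne_zero.mpr i.factorial_ne_zero
      push_cast
      field_simp
    simp only [Nat.add_sub_cancel]
    have : ∑ i ∈ Finset.range m,
        ((m ! / (i+1)! : ℝ) * ((i+1) * x ^ i) - (m ! / (i+1)! : ℝ) * x ^ (i+1))
        = ∑ i ∈ Finset.range m,
        ((m ! / i ! : ℝ) * x ^ i - (m ! / (i+1)! : ℝ) * x ^ (i+1)) := by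
      refine Finset.sum_congr rfl (fun i _ => ?_)
      rw [hc]
    push_cast at this ⊢
    rw [this, Finset.sum_range_sub' (f := fun i => (m ! / i ! : ℝ) * x ^ i)]
    simp [Nat.factorial_ne_zero]
    ring
  rw [this]
  ring

lemma ibp {ρ : ℝ} (hρ : 0 < ρ) (m : ℕ) :
    ∫ x in Ioi (0:ℝ), log (1 + x / ρ) * x ^ m * exp (-x)
      = ∑ k ∈ Finset.range (m+1),
          (m ! / k ! : ℝ) * ∫ x in Ioi (0:ℝ), exp (-x) * x ^ k / (ρ + x) := by
  set S : ℝ → ℝ := fun x => ∑ k ∈ Finset.range (m+1), (m ! / k ! : ℝ) * (x ^ k * exp (-x))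
    with hSdef
  have hSderiv : ∀ x : ℝ, HasDerivAt S (-(x ^ m * exp (-x))) x := by
    intro x
    rw [← telescope m x]
    refine HasDerivAt.fun_sum (fun k _ => ?_)
    have h1 : HasDerivAt (fun x : ℝ => x ^ k) ((k : ℝ) * x ^ (k-1)) x := hasDerivAt_pow k x
    have h2 : HasDerivAt (fun x : ℝ => exp (-x)) (-exp (-x)) x := by
      simpa using ((hasDerivAt_id x).neg).exp
    exact (h1.mul h2).const_mul _
  have hSnonneg : ∀ x : ℝ, 0 ≤ x → 0 ≤ S x := by
    intro x hx
    refine Finset.sum_nonneg (fun k _ => ?_)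
    positivity
  -- G and its derivative
  set G : ℝ → ℝ := fun x => log (1 + x / ρ) * S x with hGdef
  set f' : ℝ → ℝ := fun x => S x / (ρ + x) - log (1 + x / ρ) * x ^ m * exp (-x) with hf'def
  have hGderiv : ∀ x ∈ Ici (0:ℝ), HasDerivAt G (f' x) x := by
    intro x hx
    have hx0 : (0:ℝ) ≤ x := hx
    have h1 : (0:ℝ) < 1 + x / ρ := by positivity
    have hlog : HasDerivAt (fun x : ℝ => log (1 + x / ρ)) (1 / (ρ + x)) x := by
      have hin : HasDerivAt (fun x : ℝ => 1 + x / ρ) ρ⁻¹ x := by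
        simpa using ((hasDerivAt_id x).div_const ρ).const_add 1
      have := (Real.hasDerivAt_log h1.ne').comp x hin
      refine this.congr_deriv ?_
      field_simp
    have := hlog.mul (hSderiv x)
    refine this.congr_deriv ?_
    simp only [hf'def]
    field_simp
    ring
  have intS : IntegrableOn (fun x : ℝ => S x / (ρ + x)) (Ioi 0) := by
    have : IntegrableOn (fun x : ℝ => ∑ k ∈ Finset.range (m+1),
        (m ! / k ! : ℝ) * (exp (-x) * x ^ k / (ρ + x))) (Ioi 0) :=
      integrable_finset_sum _ (fun k _ => (intA hρ k).const_mul _)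
    refine this.congr_fun (fun x hx => ?_) measurableSet_Ioi
    have hx0 : (0:ℝ) < x := hx
    have h1 : (0:ℝ) < ρ + x := by linarith
    rw [hSdef]
    simp only
    rw [Finset.sum_div]
    refine Finset.sum_congr rfl (fun k _ => ?_)
    ring
  have intLog : IntegrableOn (fun x : ℝ => log (1 + x / ρ) * x ^ m * exp (-x)) (Ioi 0) := by
    refine Integrable.mono' ((gamma_int (m+1)).const_mul ρ⁻¹) ?_ ?_
    · refine (ContinuousOn.aestronglyMeasurable ?_ measurableSet_Ioi)
      refine (ContinuousOn.mul (ContinuousOn.mul (ContinuousOn.log (by fun_prop)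
        (fun x hx => ?_)) (by fun_prop)) (by fun_prop))
      have : (0:ℝ) < x := hx
      positivity
    · refine (ae_restrict_iff' measurableSet_Ioi).2 (ae_of_all _ (fun x hx => ?_))
      have hx0 : (0:ℝ) < x := hx
      have h1 : (0:ℝ) < 1 + x / ρ := by positivity
      have hlog0 : 0 ≤ log (1 + x / ρ) := log_nonneg (by nlinarith [div_nonneg hx0.le hρ.le])
      have hlog : log (1 + x / ρ) ≤ x / ρ := by
        have := Real.log_le_sub_one_of_pos h1
        linarith
      rw [Real.norm_eq_abs, abs_of_nonneg (by positivity)]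
      calc log (1 + x / ρ) * x ^ m * exp (-x) ≤ (x / ρ) * x ^ m * exp (-x) := by
            refine mul_le_mul_of_nonneg_right (mul_le_mul_of_nonneg_right hlog (by positivity))
              (by positivity)
        _ = ρ⁻¹ * (exp (-x) * x ^ (m+1)) := by rw [pow_succ]; ring
  have intf' : IntegrableOn f' (Ioi 0) := intS.sub intLog
  have htend : Tendsto G atTop (𝓝 0) := by
    have hbig : Tendsto (fun x : ℝ =>
        ((∑ k ∈ Finset.range (m+1), (m ! / k ! : ℝ)) / ρ) * (x ^ (m+1) * exp (-x)))
        atTop (𝓝 0) := by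
      have := tendsto_pow_mul_exp_neg_atTop_nhds_zero (m+1)
      simpa using this.const_mul ((∑ k ∈ Finset.range (m+1), (m ! / k ! : ℝ)) / ρ)
    refine squeeze_zero' ?_ ?_ hbig
    · filter_upwards [eventually_ge_atTop (0:ℝ)] with x hx
      have h1 : (0:ℝ) < 1 + x / ρ := by positivity
      exact mul_nonneg (log_nonneg (by nlinarith [div_nonneg hx hρ.le])) (hSnonneg x hx)
    · filter_upwards [eventually_ge_atTop (1:ℝ)] with x hx
      have hx0 : (0:ℝ) < x := lt_of_lt_of_le one_pos hx
      have h1 : (0:ℝ) < 1 + x / ρ := by positivity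
      have hlog : log (1 + x / ρ) ≤ x / ρ := by
        have := Real.log_le_sub_one_of_pos h1
        linarith
      have hS : S x ≤ (∑ k ∈ Finset.range (m+1), (m ! / k ! : ℝ)) * (x ^ m * exp (-x)) := by
        rw [Finset.sum_mul]
        refine Finset.sum_le_sum (fun k hk => ?_)
        have hkm : k ≤ m := by
          have := Finset.mem_range.mp hk; omega
        refine mul_le_mul_of_nonneg_left (mul_le_mul_of_nonneg_right
          (pow_le_pow_right₀ hx hkm) (exp_pos _).le) (by positivity)
      have hlog0 : 0 ≤ log (1 + x / ρ) := log_nonneg (by nlinarith [div_nonneg hx0.le hρ.le])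
      calc G x ≤ (x / ρ) * S x :=
            mul_le_mul_of_nonneg_right hlog (hSnonneg x hx0.le)
        _ ≤ (x / ρ) * ((∑ k ∈ Finset.range (m+1), (m ! / k ! : ℝ)) * (x ^ m * exp (-x))) :=
            mul_le_mul_of_nonneg_left hS (by positivity)
        _ = ((∑ k ∈ Finset.range (m+1), (m ! / k ! : ℝ)) / ρ) * (x ^ (m+1) * exp (-x)) := by
            rw [pow_succ]; ring
  have hftc := integral_Ioi_of_hasDerivAt_of_tendsto' hGderiv intf' htend
  have hG0 : G 0 = 0 := by
    simp [hGdef]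
  rw [hG0, sub_zero] at hftc
  have hsplit : ∫ x in Ioi (0:ℝ), f' x
      = (∫ x in Ioi (0:ℝ), S x / (ρ + x))
        - ∫ x in Ioi (0:ℝ), log (1 + x / ρ) * x ^ m * exp (-x) :=
    integral_sub intS intLog
  rw [hftc] at hsplit
  have hmain : ∫ x in Ioi (0:ℝ), log (1 + x / ρ) * x ^ m * exp (-x)
      = ∫ x in Ioi (0:ℝ), S x / (ρ + x) := by linarith
  rw [hmain]
  have : ∫ x in Ioi (0:ℝ), S x / (ρ + x)
      = ∫ x in Ioi (0:ℝ), ∑ k ∈ Finset.range (m+1),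
          (m ! / k ! : ℝ) * (exp (-x) * x ^ k / (ρ + x)) := by
    refine setIntegral_congr_fun measurableSet_Ioi (fun x hx => ?_)
    have hx0 : (0:ℝ) < x := hx
    have h1 : (0:ℝ) < ρ + x := by linarith
    rw [hSdef]
    simp only
    rw [Finset.sum_div]
    refine Finset.sum_congr rfl (fun k _ => ?_)
    ring
  rw [this, integral_finset_sum _ (fun k _ => (intA hρ k).const_mul _)]
  exact Finset.sum_congr rfl (fun k _ => MeasureTheory.integral_const_mul _ _)

/-- Closed form of the ergodic MRC capacity (Eqn. (47) / Φ in Propositions 1 and 2):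
for `n ≥ 1` and `ρ > 0`,
`(1/(n-1)!) ∫₀^∞ ln(1 + x/ρ) x^{n-1} e^{-x} dx = e^ρ ∑_{k=0}^{n-1} E_{k+1}(ρ)`,
where `E_τ(ρ) = ∫₁^∞ e^{-ρ t} t^{-τ} dt`. -/
theorem stmt_6
    (n : ℕ) (hn : 1 ≤ n) (ρ : ℝ) (hρ : 0 < ρ)
    (E : ℕ → ℝ → ℝ)
    (hE : ∀ τ : ℕ, ∀ z : ℝ, E τ z = ∫ t in Set.Ioi (1 : ℝ), Real.exp (-z * t) / t ^ τ) :
    (1 / (Nat.factorial (n - 1) : ℝ)) *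
        ∫ x in Set.Ioi (0 : ℝ), Real.log (1 + x / ρ) * x ^ (n - 1) * Real.exp (-x) =
      Real.exp ρ * ∑ k ∈ Finset.range n, E (k + 1) ρ := by
  obtain ⟨m, rfl⟩ : ∃ m, n = m + 1 := ⟨n - 1, by omega⟩
  simp only [Nat.add_sub_cancel]
  rw [ibp hρ m]
  have hm0 : ((m ! : ℝ)) ≠ 0 := Nat.cast_ne_zero.mpr m.factorial_ne_zero
  have hterm : ∀ k ∈ Finset.range (m+1),
      (m ! / k ! : ℝ) * ∫ x in Ioi (0:ℝ), exp (-x) * x ^ k / (ρ + x)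
        = ((m ! : ℝ) * exp ρ) * E (k + 1) ρ := by
    intro k _
    rw [key hρ k, hE (k+1) ρ]
    have hk0 : ((k ! : ℝ)) ≠ 0 := Nat.cast_ne_zero.mpr k.factorial_ne_zero
    field_simp
  rw [Finset.sum_congr rfl hterm, ← Finset.mul_sum]
  field_simp
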